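/- Let 1 ≤ p < 2, 0 < a < b < ∞, and α, β ∈ ℝ. There exists a radially symmetric C² function u on the closed annulus {a ≤ |x| ≤ b} ⊂ ℝ² satisfying λ(A^u) ∈ ∂Γ_p in {a < |x| < b}, with u = α on |x| = a and u = β on |x| = b. -/
import Mathlib

/-- First eigenvalue of A^u for a radially symmetric function u(r). -/
noncomputable def lam1 (u : ℝ → ℝ) (r : ℝ) : ℝ :=
  (1 / (4 * Real.exp (u r))) * ((deriv u r) ^ 2 - 4 * deriv (deriv u) r)

/-- Second eigenvalue of A^u for a radially symmetric function u(r). -/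
noncomputable def lam2 (u : ℝ → ℝ) (r : ℝ) : ℝ :=
  -(1 / (4 * Real.exp (u r) * r)) * (deriv u r) * (4 + r * deriv u r)

def GammaP (p : ℝ) : Set (ℝ × ℝ) := {l | l.2 > (p - 2) * l.1 ∧ l.1 > (p - 2) * l.2}

lemma isOpen_GammaP (p : ℝ) : IsOpen (GammaP p) := by
  have h : GammaP p = {l : ℝ × ℝ | (p-2) * l.1 < l.2} ∩ {l : ℝ × ℝ | (p-2) * l.2 < l.1} := rfl
  rw [h]
  exact (isOpen_lt (by fun_prop) (by fun_prop)).inter (isOpen_lt (by fun_prop) (by fun_prop))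

lemma mem_frontier_GammaP {p x y : ℝ} (hp : p < 2)
    (h1 : (p-2)*x ≤ y) (h2 : (p-2)*y ≤ x) (h3 : y = (p-2)*x ∨ x = (p-2)*y) :
    (x, y) ∈ frontier (GammaP p) := by
  rw [frontier, (isOpen_GammaP p).interior_eq]
  constructor
  · apply mem_closure_of_tendsto
      (f := fun n : ℕ => ((x + 1/(n+1) : ℝ), (y + 1/(n+1) : ℝ))) (b := Filter.atTop)
    · have hseq : Filter.Tendsto (fun n : ℕ => (1:ℝ)/(n+1)) Filter.atTop (nhds 0) :=
        tendsto_one_div_add_atTop_nhds_zero_nat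
      have hx : Filter.Tendsto (fun n : ℕ => x + 1/(n+1)) Filter.atTop (nhds x) := by
        simpa using tendsto_const_nhds.add hseq
      have hy : Filter.Tendsto (fun n : ℕ => y + 1/(n+1)) Filter.atTop (nhds y) := by
        simpa using tendsto_const_nhds.add hseq
      exact hx.prodMk_nhds hy
    · apply Filter.Eventually.of_forall
      intro n
      have hε : (0:ℝ) < 1/(n+1) := by positivity
      refine ⟨?_, ?_⟩
      · simp only []; nlinarith
      · simp only []; nlinarith
  · intro hmem
    rcases h3 with h | h
    · exact absurd hmem.1 (by rw [h]; simp)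
    · exact absurd hmem.2 (by rw [h]; simp)

lemma main_branch (a b q K c : ℝ) (ha : 0 < a) (hab : a < b) (hq : q ≠ 0)
    (hw : ∀ r ∈ Set.Icc a b, K * r ^ (q:ℝ) - 1 ≠ 0) :
    ContDiffOn ℝ 2 (fun r => c + (2/q) * Real.log ((K * r ^ (q:ℝ) - 1)^2) - 4 * Real.log r)
      (Set.Icc a b) ∧
    ∀ r ∈ Set.Ioo a b, ∃ s : ℝ, 0 < s ∧
      lam1 (fun r => c + (2/q) * Real.log ((K * r ^ (q:ℝ) - 1)^2) - 4 * Real.log r) r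
        = (1+q) * (K * s) ∧
      lam2 (fun r => c + (2/q) * Real.log ((K * r ^ (q:ℝ) - 1)^2) - 4 * Real.log r) r
        = -(K * s) := by
  set w : ℝ → ℝ := fun r => K * r ^ (q:ℝ) - 1 with hwdef
  set u : ℝ → ℝ := fun r => c + (2/q) * Real.log ((w r)^2) - 4 * Real.log r with hudef
  have key : ∀ s ∈ Set.Ioo a b, HasDerivAt u (4 * (s * w s)⁻¹) s := by
    intro s hs
    have hs0 : 0 < s := lt_trans ha hs.1
    have hws : w s ≠ 0 := hw s ⟨le_of_lt hs.1, le_of_lt hs.2⟩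
    have d1 : HasDerivAt (fun r : ℝ => r ^ (q:ℝ)) (q * s ^ (q-1)) s :=
      Real.hasDerivAt_rpow_const (Or.inl (ne_of_gt hs0))
    have d2 : HasDerivAt w (K * (q * s ^ (q-1))) s := (d1.const_mul K).sub_const _
    have d3 : HasDerivAt (fun r => (w r)^2) ((2:ℕ) * w s ^ (2-1) * (K * (q * s ^ (q-1)))) s :=
      d2.pow 2
    have d4 : HasDerivAt (fun r => Real.log ((w r)^2))
        (((2:ℕ) * w s ^ (2-1) * (K * (q * s ^ (q-1)))) / (w s)^2) s :=
      d3.log (pow_ne_zero 2 hws)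
    have d5 : HasDerivAt Real.log s⁻¹ s := Real.hasDerivAt_log (ne_of_gt hs0)
    have du : HasDerivAt u
        ((2/q) * (((2:ℕ) * w s ^ (2-1) * (K * (q * s ^ (q-1)))) / (w s)^2) - 4 * s⁻¹) s :=
      ((d4.const_mul (2/q)).const_add c).sub (d5.const_mul 4)
    convert du using 1
    have hpow : s ^ (q-1) = s ^ (q:ℝ) / s := by
      rw [eq_div_iff (ne_of_gt hs0), ← Real.rpow_add_one (ne_of_gt hs0) (q-1)]; norm_num
    have hWs : w s = K * s ^ (q:ℝ) - 1 := rfl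
    have hws' : K * s ^ (q:ℝ) - 1 ≠ 0 := hws
    rw [hpow, hWs]
    field_simp [ne_of_gt hs0, hws', hq]
    ring
  refine ⟨?_, ?_⟩
  · intro x hx
    have hx0 : 0 < x := lt_of_lt_of_le ha hx.1
    have hwx : w x ≠ 0 := hw x hx
    have h1 : ContDiffAt ℝ 2 (fun r : ℝ => r ^ (q:ℝ)) x :=
      Real.contDiffAt_rpow_const_of_ne (ne_of_gt hx0)
    have h2 : ContDiffAt ℝ 2 w x := (contDiffAt_const.mul h1).sub contDiffAt_const
    have h3 : ContDiffAt ℝ 2 (fun r => (w r)^2) x := h2.pow 2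
    have h4 : ContDiffAt ℝ 2 (fun r => Real.log ((w r)^2)) x := h3.log (pow_ne_zero 2 hwx)
    have h5 : ContDiffAt ℝ 2 (fun r : ℝ => Real.log r) x := Real.contDiffAt_log.mpr (ne_of_gt hx0)
    exact (((contDiffAt_const.add (contDiffAt_const.mul h4)).sub
      (contDiffAt_const.mul h5)).contDiffWithinAt)
  · intro r hr
    have hr0 : 0 < r := lt_trans ha hr.1
    have hwr : w r ≠ 0 := hw r ⟨le_of_lt hr.1, le_of_lt hr.2⟩
    have hg : r * w r ≠ 0 := mul_ne_zero (ne_of_gt hr0) hwr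
    have hder1 : deriv u r = 4 * (r * w r)⁻¹ := (key r hr).deriv
    have hev : deriv u =ᶠ[nhds r] fun s => 4 * (s * w s)⁻¹ :=
      Filter.eventuallyEq_of_mem (Ioo_mem_nhds hr.1 hr.2) (fun s hs => (key s hs).deriv)
    have d1 : HasDerivAt (fun r : ℝ => r ^ (q:ℝ)) (q * r ^ (q-1)) r :=
      Real.hasDerivAt_rpow_const (Or.inl (ne_of_gt hr0))
    have d2 : HasDerivAt w (K * (q * r ^ (q-1))) r := (d1.const_mul K).sub_const _
    have dg : HasDerivAt (fun s => s * w s) (1 * w r + r * (K * (q * r ^ (q-1)))) r :=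
      (hasDerivAt_id r).mul d2
    have dV : HasDerivAt (fun s => 4 * (s * w s)⁻¹)
        (4 * (-(1 * w r + r * (K * (q * r ^ (q-1)))) / (r * w r)^2)) r := (dg.inv hg).const_mul 4
    have hder2 : deriv (deriv u) r = 4 * (-(1 * w r + r * (K * (q * r ^ (q-1)))) / (r * w r)^2) := by
      rw [hev.deriv_eq]; exact dV.deriv
    have hpow : r ^ (q-1) = r ^ (q:ℝ) / r := by
      rw [eq_div_iff (ne_of_gt hr0), ← Real.rpow_add_one (ne_of_gt hr0) (q-1)]; norm_num
    have hWr : w r = K * r ^ (q:ℝ) - 1 := rfl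
    have hwr' : K * r ^ (q:ℝ) - 1 ≠ 0 := hwr
    have hrq : (0:ℝ) < r ^ (q:ℝ) := Real.rpow_pos_of_pos hr0 q
    obtain ⟨E, hE0, hEdef⟩ : ∃ E, 0 < E ∧ Real.exp (u r) = E := ⟨_, Real.exp_pos _, rfl⟩
    have hE' : E ≠ 0 := ne_of_gt hE0
    refine ⟨4 * r ^ (q:ℝ) / (E * (r * w r)^2), by positivity, ?_, ?_⟩
    · simp only [lam1, hder1, hder2]
      rw [hEdef, hpow, hWr]
      field_simp [ne_of_gt hr0, hwr', hq, hE']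
      ring
    · simp only [lam2, hder1]
      rw [hEdef, hWr]
      field_simp [ne_of_gt hr0, hwr', hq, hE']
      ring

lemma build (a b α β q K : ℝ) (ha : 0 < a) (hab : a < b) (hq : q ≠ 0)
    (hw : ∀ r ∈ Set.Icc a b, K * r ^ (q:ℝ) - 1 ≠ 0)
    (hK : K * b ^ (q:ℝ) - 1
        = Real.exp (q * ((β - α)/4 + (Real.log b - Real.log a))) * (K * a ^ (q:ℝ) - 1)) :
    ∃ u : ℝ → ℝ, ContDiffOn ℝ 2 u (Set.Icc a b) ∧
      (∀ r ∈ Set.Ioo a b, ∃ s : ℝ, 0 < s ∧ lam1 u r = (1+q) * (K * s) ∧ lam2 u r = -(K * s)) ∧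
      u a = α ∧ u b = β := by
  set c := α - (2/q) * Real.log ((K * a ^ (q:ℝ) - 1)^2) + 4 * Real.log a with hc
  obtain ⟨hcd, hlam⟩ := main_branch a b q K c ha hab hq hw
  refine ⟨_, hcd, hlam, ?_, ?_⟩
  · show c + (2/q) * Real.log ((K * a ^ (q:ℝ) - 1)^2) - 4 * Real.log a = α
    rw [hc]; ring
  · show c + (2/q) * Real.log ((K * b ^ (q:ℝ) - 1)^2) - 4 * Real.log b = β
    rw [hc, hK]
    have hwa : K * a ^ (q:ℝ) - 1 ≠ 0 := hw a ⟨le_refl a, le_of_lt hab⟩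
    have hE : Real.exp (q * ((β - α)/4 + (Real.log b - Real.log a))) ≠ 0 := Real.exp_ne_zero _
    rw [mul_pow, Real.log_mul (pow_ne_zero 2 hE) (pow_ne_zero 2 hwa),
      pow_two (Real.exp (q * ((β - α)/4 + (Real.log b - Real.log a)))), ← Real.exp_add,
      Real.log_exp]
    field_simp
    ring

lemma hK_choice (a b q D : ℝ) (ha : 0 < a) (hab : a < b) (hs : q * D / 4 ≠ 0) :
    ((1 - Real.exp (q * (D/4 + (Real.log b - Real.log a)))) /
        (b ^ (q:ℝ) * (1 - Real.exp (q * D / 4)))) * b ^ (q:ℝ) - 1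
      = Real.exp (q * (D/4 + (Real.log b - Real.log a))) *
        (((1 - Real.exp (q * (D/4 + (Real.log b - Real.log a)))) /
          (b ^ (q:ℝ) * (1 - Real.exp (q * D / 4)))) * a ^ (q:ℝ) - 1) := by
  have hb0 : 0 < b := lt_trans ha hab
  have hbq : (0:ℝ) < b ^ (q:ℝ) := Real.rpow_pos_of_pos hb0 q
  have hne : 1 - Real.exp (q * D / 4) ≠ 0 := by
    intro h
    have h1 : Real.exp (q*D/4) = Real.exp 0 := by rw [Real.exp_zero]; linarith
    exact hs (Real.exp_eq_exp.mp h1)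
  have hba : b ^ (q:ℝ) = a ^ (q:ℝ) * Real.exp (q * (Real.log b - Real.log a)) := by
    rw [Real.rpow_def_of_pos hb0, Real.rpow_def_of_pos ha, ← Real.exp_add]
    ring_nf
  have hEa : Real.exp (q * (D/4 + (Real.log b - Real.log a))) * a ^ (q:ℝ)
      = Real.exp (q * D / 4) * b ^ (q:ℝ) := by
    rw [hba, show q * (D/4 + (Real.log b - Real.log a)) = q*D/4 + q*(Real.log b - Real.log a)
      from by ring, Real.exp_add]
    ring
  obtain ⟨EB, hEB⟩ : ∃ x, Real.exp (q * (D/4 + (Real.log b - Real.log a))) = x := ⟨_, rfl⟩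
  obtain ⟨ES, hES⟩ : ∃ x, Real.exp (q * D / 4) = x := ⟨_, rfl⟩
  rw [hEB, hES] at hEa
  rw [hES] at hne
  rw [hEB, hES]
  have hbq' : b ^ (q:ℝ) ≠ 0 := ne_of_gt hbq
  field_simp
  linear_combination (EB - 1) * hEa

/-- `w a = K * a^q - 1` for the chosen `K` equals `(a^q - b^q) / (b^q * (1 - ES))`. -/
lemma wa_formula (a b q D : ℝ) (ha : 0 < a) (hab : a < b) (hs : q * D / 4 ≠ 0) :
    ((1 - Real.exp (q * (D/4 + (Real.log b - Real.log a)))) /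
        (b ^ (q:ℝ) * (1 - Real.exp (q * D / 4)))) * a ^ (q:ℝ) - 1
      = (a ^ (q:ℝ) - b ^ (q:ℝ)) / (b ^ (q:ℝ) * (1 - Real.exp (q * D / 4))) := by
  have hb0 : 0 < b := lt_trans ha hab
  have hbq : (0:ℝ) < b ^ (q:ℝ) := Real.rpow_pos_of_pos hb0 q
  have hne : 1 - Real.exp (q * D / 4) ≠ 0 := by
    intro h
    have h1 : Real.exp (q*D/4) = Real.exp 0 := by rw [Real.exp_zero]; linarith
    exact hs (Real.exp_eq_exp.mp h1)
  have hba : b ^ (q:ℝ) = a ^ (q:ℝ) * Real.exp (q * (Real.log b - Real.log a)) := by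
    rw [Real.rpow_def_of_pos hb0, Real.rpow_def_of_pos ha, ← Real.exp_add]
    ring_nf
  have hEa : Real.exp (q * (D/4 + (Real.log b - Real.log a))) * a ^ (q:ℝ)
      = Real.exp (q * D / 4) * b ^ (q:ℝ) := by
    rw [hba, show q * (D/4 + (Real.log b - Real.log a)) = q*D/4 + q*(Real.log b - Real.log a)
      from by ring, Real.exp_add]
    ring
  obtain ⟨EB, hEB⟩ : ∃ x, Real.exp (q * (D/4 + (Real.log b - Real.log a))) = x := ⟨_, rfl⟩
  obtain ⟨ES, hES⟩ : ∃ x, Real.exp (q * D / 4) = x := ⟨_, rfl⟩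
  rw [hEB, hES] at hEa
  rw [hES] at hne
  rw [hEB, hES]
  have hbq' : b ^ (q:ℝ) ≠ 0 := ne_of_gt hbq
  field_simp
  linear_combination -hEa

set_option maxHeartbeats 1000000 in
theorem stmt10 (p a b α β : ℝ) (hp1 : 1 ≤ p) (hp2 : p < 2) (ha : 0 < a) (hab : a < b) :
    ∃ u : ℝ → ℝ, ContDiffOn ℝ 2 u (Set.Icc a b) ∧
      (∀ r ∈ Set.Ioo a b, (lam1 u r, lam2 u r) ∈ frontier (GammaP p)) ∧
      u a = α ∧ u b = β := by
  have hb0 : 0 < b := lt_trans ha hab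
  have hL : 0 < Real.log b - Real.log a := sub_pos.mpr (Real.log_lt_log ha hab)
  set L := Real.log b - Real.log a with hLdef
  set d := β - α with hddef
  -- Case d = 0 : constant function
  by_cases hd0 : d = 0
  · refine ⟨fun _ => α, contDiffOn_const, ?_, rfl, by rw [show β = α from by linarith [hd0.symm ▸ hddef]]⟩
    intro r hr
    have hder : deriv (fun _ : ℝ => α) = fun _ : ℝ => (0:ℝ) := by
      funext x; exact deriv_const x α
    have h1 : lam1 (fun _ => α) r = 0 := by
      simp [lam1, hder]
    have h2 : lam2 (fun _ => α) r = 0 := by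
      simp [lam2, hder]
    rw [h1, h2]
    exact mem_frontier_GammaP hp2 (by simp) (by simp) (Or.inl (by ring))
  -- Case p = 1 : logarithmic function
  by_cases hp1' : p = 1
  · set B := d / L with hB
    refine ⟨fun r => α + B * (Real.log r - Real.log a), ?_, ?_, by simp, ?_⟩
    · intro x hx
      have hx0 : 0 < x := lt_of_lt_of_le ha hx.1
      exact (contDiffAt_const.add (contDiffAt_const.mul
        ((Real.contDiffAt_log.mpr (ne_of_gt hx0)).sub contDiffAt_const))).contDiffWithinAt
    · intro r hr
      have hr0 : 0 < r := lt_trans ha hr.1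
      set u : ℝ → ℝ := fun r => α + B * (Real.log r - Real.log a) with hudef
      have key : ∀ s ∈ Set.Ioi (0:ℝ), HasDerivAt u (B * s⁻¹) s := fun s hs =>
        (((Real.hasDerivAt_log (ne_of_gt hs)).sub_const _).const_mul B).const_add α
      have hder1 : deriv u r = B * r⁻¹ := (key r hr0).deriv
      have hev : deriv u =ᶠ[nhds r] fun s => B * s⁻¹ :=
        Filter.eventuallyEq_of_mem (Ioi_mem_nhds hr0) (fun s hs => (key s hs).deriv)
      have dV : HasDerivAt (fun s : ℝ => B * s⁻¹) (B * (-(r^2)⁻¹)) r :=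
        (hasDerivAt_inv (ne_of_gt hr0)).const_mul B
      have hder2 : deriv (deriv u) r = B * (-(r^2)⁻¹) := by
        rw [hev.deriv_eq]; exact dV.deriv
      have hrel : lam2 u r = -(lam1 u r) := by
        simp only [lam1, lam2, hder1, hder2]
        have hE' : Real.exp (u r) ≠ 0 := Real.exp_ne_zero _
        field_simp
        ring
      rw [hrel]
      refine mem_frontier_GammaP hp2 ?_ ?_ (Or.inl ?_) <;> rw [hp1'] <;> ring_nf <;> try rfl
    · show α + B * (Real.log b - Real.log a) = β
      rw [hB]
      field_simp [ne_of_gt hL]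
      linarith [hddef]
  -- Now 1 < p
  have hp1'' : 1 < p := lt_of_le_of_ne hp1 (Ne.symm hp1')
  have h2p : (0:ℝ) < 2 - p := by linarith
  have h2p1 : 2 - p ≤ 1 := by linarith
  have hsq1 : (2-p)*(2-p) ≤ 1 := by nlinarith
  -- helper to conclude frontier membership for branch 1 (q = (p-1)/(2-p), K ≥ 0)
  have glue1 : ∀ K : ℝ, 0 ≤ K → ∀ x y s : ℝ, 0 < s →
      x = (1 + (p-1)/(2-p)) * (K * s) → y = -(K * s) → (x, y) ∈ frontier (GammaP p) := by
    intro K hK x y s hs hx hy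
    have hKS : 0 ≤ K * s := mul_nonneg hK (le_of_lt hs)
    have hq1 : 1 + (p-1)/(2-p) = 1/(2-p) := by field_simp; ring
    have heq : y = (p-2) * x := by
      rw [hx, hy, hq1]; field_simp; ring
    refine mem_frontier_GammaP hp2 (le_of_eq heq.symm) ?_ (Or.inl heq)
    rw [hx, hy, hq1]
    rw [div_mul_eq_mul_div, le_div_iff₀ h2p] at *
    nlinarith [mul_nonneg hKS (by linarith : (0:ℝ) ≤ 1 - (2-p)*(2-p))]
  -- helper for branch 2 (q = 1 - p, K ≤ 0)
  have glue2 : ∀ K : ℝ, K ≤ 0 → ∀ x y s : ℝ, 0 < s →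
      x = (1 + (1-p)) * (K * s) → y = -(K * s) → (x, y) ∈ frontier (GammaP p) := by
    intro K hK x y s hs hx hy
    have hKS : K * s ≤ 0 := mul_nonpos_of_nonpos_of_nonneg hK (le_of_lt hs)
    have heq : x = (p-2) * y := by rw [hx, hy]; ring
    refine mem_frontier_GammaP hp2 ?_ (le_of_eq heq.symm) (Or.inr heq)
    rw [hx, hy]
    nlinarith [mul_nonneg (neg_nonneg.mpr hKS) (by linarith : (0:ℝ) ≤ 1 - (2-p)*(2-p))]
  rcases lt_trichotomy d 0 with hdneg | hdz | hdpos
  · -- d < 0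
    rcases le_or_gt d (-4*L) with hdle | hdgt
    · -- d ≤ -4L : branch 1 with K ≥ 0, w < 0 on [a,b]
      set q := (p-1)/(2-p) with hqdef
      have hq0 : 0 < q := div_pos (by linarith) h2p
      have hq : q ≠ 0 := ne_of_gt hq0
      have hqd : q * d < 0 := mul_neg_of_pos_of_neg hq0 hdneg
      have hs : q * d / 4 ≠ 0 := div_ne_zero (ne_of_lt hqd) (by norm_num)
      set ES := Real.exp (q * d / 4) with hESdef
      set EB := Real.exp (q * (d/4 + L)) with hEBdef
      set K := (1 - EB) / (b ^ (q:ℝ) * (1 - ES)) with hKdef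
      have hbq : (0:ℝ) < b ^ (q:ℝ) := Real.rpow_pos_of_pos hb0 q
      have haq : (0:ℝ) < a ^ (q:ℝ) := Real.rpow_pos_of_pos ha q
      have hES1 : ES < 1 := Real.exp_lt_one_iff.mpr (div_neg_of_neg_of_pos hqd (by norm_num))
      have hEB1 : EB ≤ 1 := Real.exp_le_one_iff.mpr (by
        have hd4 : d/4 + L ≤ 0 := by linarith
        exact mul_nonpos_of_nonneg_of_nonpos (le_of_lt hq0) hd4)
      have hKnn : 0 ≤ K := by
        rw [hKdef]
        apply div_nonneg (by linarith)
        nlinarith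
      have hwa : K * a ^ (q:ℝ) - 1 = (a ^ (q:ℝ) - b ^ (q:ℝ)) / (b ^ (q:ℝ) * (1 - ES)) :=
        wa_formula a b q d ha hab hs
      have haqbq : a ^ (q:ℝ) < b ^ (q:ℝ) := Real.rpow_lt_rpow (le_of_lt ha) hab hq0
      have hwaneg : K * a ^ (q:ℝ) - 1 < 0 := by
        rw [hwa]
        apply div_neg_of_neg_of_pos (by linarith)
        nlinarith
      have hKid : K * b ^ (q:ℝ) - 1 = EB * (K * a ^ (q:ℝ) - 1) := by
        rw [hKdef, hESdef, hEBdef]; exact hK_choice a b q d ha hab hs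
      have hEB0 : 0 < EB := Real.exp_pos _
      have hwbneg : K * b ^ (q:ℝ) - 1 < 0 := by
        rw [hKid]; exact mul_neg_of_pos_of_neg hEB0 hwaneg
      have hw : ∀ r ∈ Set.Icc a b, K * r ^ (q:ℝ) - 1 ≠ 0 := by
        intro r hrr
        have h1 : r ^ (q:ℝ) ≤ b ^ (q:ℝ) := Real.rpow_le_rpow
          (le_trans (le_of_lt ha) hrr.1) hrr.2 (le_of_lt hq0)
        have : K * r ^ (q:ℝ) ≤ K * b ^ (q:ℝ) := mul_le_mul_of_nonneg_left h1 hKnn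
        intro h; nlinarith
      obtain ⟨u, hcd, hlam, hua, hub⟩ := build a b α β q K ha hab hq hw hKid
      refine ⟨u, hcd, ?_, hua, hub⟩
      intro r hr
      obtain ⟨s, hs0, hl1, hl2⟩ := hlam r hr
      exact glue1 K hKnn _ _ s hs0 hl1 hl2
    · -- -4L < d < 0 : branch 2 with K < 0
      set q := 1 - p with hqdef
      have hq0 : q < 0 := by rw [hqdef]; linarith
      have hq : q ≠ 0 := ne_of_lt hq0
      have hqd : 0 < q * d := mul_pos_of_neg_of_neg hq0 hdneg
      have hs : q * d / 4 ≠ 0 := ne_of_gt (div_pos hqd (by norm_num))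
      set ES := Real.exp (q * d / 4) with hESdef
      set EB := Real.exp (q * (d/4 + L)) with hEBdef
      set K := (1 - EB) / (b ^ (q:ℝ) * (1 - ES)) with hKdef
      have hbq : (0:ℝ) < b ^ (q:ℝ) := Real.rpow_pos_of_pos hb0 q
      have hES1 : 1 < ES := Real.one_lt_exp_iff.mpr (div_pos hqd (by norm_num))
      have hEB1 : EB < 1 := Real.exp_lt_one_iff.mpr (by
        have hd4 : 0 < d/4 + L := by linarith
        exact mul_neg_of_neg_of_pos hq0 hd4)
      have hKneg : K < 0 := by
        rw [hKdef]
        apply div_neg_of_pos_of_neg (by linarith)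
        nlinarith
      have hw : ∀ r ∈ Set.Icc a b, K * r ^ (q:ℝ) - 1 ≠ 0 := by
        intro r hrr
        have hr0 : 0 < r := lt_of_lt_of_le ha hrr.1
        have : K * r ^ (q:ℝ) < 0 :=
          mul_neg_of_neg_of_pos hKneg (Real.rpow_pos_of_pos hr0 q)
        intro h; nlinarith
      obtain ⟨u, hcd, hlam, hua, hub⟩ := build a b α β q K ha hab hq hw
        (by rw [hKdef, hESdef, hEBdef]; exact hK_choice a b q d ha hab hs)
      refine ⟨u, hcd, ?_, hua, hub⟩
      intro r hr
      obtain ⟨s, hs0, hl1, hl2⟩ := hlam r hr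
      exact glue2 K (le_of_lt hKneg) _ _ s hs0 hl1 hl2
  · exact absurd hdz hd0
  · -- d > 0 : branch 1 with K > 0, w > 0 on [a,b]
    set q := (p-1)/(2-p) with hqdef
    have hq0 : 0 < q := div_pos (by linarith) h2p
    have hq : q ≠ 0 := ne_of_gt hq0
    have hs : q * d / 4 ≠ 0 := by positivity
    set ES := Real.exp (q * d / 4) with hESdef
    set EB := Real.exp (q * (d/4 + L)) with hEBdef
    set K := (1 - EB) / (b ^ (q:ℝ) * (1 - ES)) with hKdef
    have hbq : (0:ℝ) < b ^ (q:ℝ) := Real.rpow_pos_of_pos hb0 q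
    have haq : (0:ℝ) < a ^ (q:ℝ) := Real.rpow_pos_of_pos ha q
    have hES1 : 1 < ES := Real.one_lt_exp_iff.mpr (by positivity)
    have hEB1 : 1 < EB := Real.one_lt_exp_iff.mpr (by positivity)
    have hKpos : 0 < K := by
      rw [hKdef]
      apply div_pos_of_neg_of_neg (by linarith)
      nlinarith
    have hwa : K * a ^ (q:ℝ) - 1 = (a ^ (q:ℝ) - b ^ (q:ℝ)) / (b ^ (q:ℝ) * (1 - ES)) :=
      wa_formula a b q d ha hab hs
    have haqbq : a ^ (q:ℝ) < b ^ (q:ℝ) := Real.rpow_lt_rpow (le_of_lt ha) hab hq0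
    have hwapos : 0 < K * a ^ (q:ℝ) - 1 := by
      rw [hwa]
      apply div_pos_of_neg_of_neg (by linarith)
      nlinarith
    have hw : ∀ r ∈ Set.Icc a b, K * r ^ (q:ℝ) - 1 ≠ 0 := by
      intro r hrr
      have h1 : a ^ (q:ℝ) ≤ r ^ (q:ℝ) := Real.rpow_le_rpow (le_of_lt ha) hrr.1 (le_of_lt hq0)
      have : K * a ^ (q:ℝ) ≤ K * r ^ (q:ℝ) := mul_le_mul_of_nonneg_left h1 (le_of_lt hKpos)
      intro h; nlinarith
    obtain ⟨u, hcd, hlam, hua, hub⟩ := build a b α β q K ha hab hq hw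
      (by rw [hKdef, hESdef, hEBdef]; exact hK_choice a b q d ha hab hs)
    refine ⟨u, hcd, ?_, hua, hub⟩
    intro r hr
    obtain ⟨s, hs0, hl1, hl2⟩ := hlam r hr
    exact glue1 K (le_of_lt hKpos) _ _ s hs0 hl1 hl2
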